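/- arXiv:2303.05010 — 4 statements merged into one kernel-verified Lean document; each statement's English description precedes it below -/
import Mathlib

section
/- The images in Λ/R of the elements W_k for integers k ≥ 4 are linearly independent over ℚ. -/
/-- The group algebra `Λ = ℚ[ℤ²]`, with basis the monomials `t₁^a t₃^b` for `(a,b) ∈ ℤ²`. -/
abbrev Lam : Type := AddMonoidAlgebra ℚ (ℤ × ℤ)

/-- The monomial `t₁^a t₃^b ∈ Λ`. -/
noncomputable def mono (a b : ℤ) : Lam := AddMonoidAlgebra.single (a, b) (1 : ℚ)

/-- The hexagon relator
`h_{α,β} = t₁^{α−β} t₃^{−β} − t₁^{α} t₃^{α−β} + ε·(t₁^{β} t₃^{β−α} − t₁^{β−α} t₃^{−α})`. -/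
noncomputable def hex (ε : ℚ) (α β : ℤ) : Lam :=
  mono (α - β) (-β) - mono α (α - β) + ε • (mono β (β - α) - mono (β - α) (-α))

/-- `R`, the ℚ-linear span of the hexagon relators. -/
noncomputable def hexRel (ε : ℚ) : Submodule ℚ Lam :=
  Submodule.span ℚ {h : Lam | ∃ α β : ℤ, h = hex ε α β}

/-- The element `W_k ∈ Λ`. -/
noncomputable def W (ε : ℚ) (k : ℤ) : Lam :=
  ((k : ℚ) - 1) • (mono (-1) (1 - k) + ε • mono (1 - k) (-1)
      - mono (2 - k) 1 - ε • mono 1 (2 - k))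
    + mono 1 (k - 1) + ε • mono (k - 1) 1
    - mono (1 - k) (2 - k) - ε • mono (2 - k) (1 - k)

noncomputable def Lf (ε : ℚ) (j : ℤ) : Lam →ₗ[ℚ] ℚ :=
  (Finsupp.lapply (j-1, j-2) - ε • Finsupp.lapply (2-j, 1-j)) ∘ₗ
    (AddMonoidAlgebra.coeffLinearEquiv ℚ).toLinearMap

lemma Lf_apply (ε : ℚ) (j : ℤ) (x : Lam) :
    Lf ε j x = x.coeff (j-1, j-2) - ε * x.coeff (2-j, 1-j) := rfl

lemma Lf_mono (ε : ℚ) (j a b : ℤ) :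
    Lf ε j (mono a b) = (if a = j-1 ∧ b = j-2 then 1 else 0)
      - ε * (if a = 2-j ∧ b = 1-j then 1 else 0) := by
  rw [Lf_apply]
  show (Finsupp.single ((a:ℤ),(b:ℤ)) (1:ℚ)) (j-1,j-2)
      - ε * (Finsupp.single ((a:ℤ),(b:ℤ)) (1:ℚ)) (2-j,1-j) = _
  simp [Finsupp.single_apply, Prod.ext_iff]

lemma Lf_pair (ε : ℚ) (hε2 : ε * ε = 1) (j a b : ℤ) :
    Lf ε j (mono a b) + ε * Lf ε j (mono (-b) (-a)) = 0 := by
  rw [Lf_mono, Lf_mono]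
  have h1 : ((-b = j-1 ∧ -a = j-2) ↔ (a = 2-j ∧ b = 1-j)) := by constructor <;> (intro h; omega)
  have h2 : ((-b = 2-j ∧ -a = 1-j) ↔ (a = j-1 ∧ b = j-2)) := by constructor <;> (intro h; omega)
  rw [if_congr h1 rfl rfl, if_congr h2 rfl rfl]
  split_ifs <;> first
    | omega
    | linear_combination (-1 : ℚ) * hε2
    | ring

lemma Lf_hex (ε : ℚ) (hε2 : ε * ε = 1) (j α β : ℤ) : Lf ε j (hex ε α β) = 0 := by
  have e1 := Lf_pair ε hε2 j (α - β) (-β)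
  have e2 := Lf_pair ε hε2 j α (α - β)
  have h1 : mono (-(-β)) (-(α-β)) = mono β (β - α) := by congr 1 <;> ring
  have h2 : mono (-(α-β)) (-α) = mono (β-α) (-α) := by congr 1 <;> ring
  rw [h1] at e1
  rw [h2] at e2
  simp only [hex, map_add, map_sub, map_smul, smul_eq_mul]
  linarith [e1, e2]

lemma Lf_ker (ε : ℚ) (hε2 : ε * ε = 1) (j : ℤ) :
    hexRel ε ≤ LinearMap.ker (Lf ε j) := by
  rw [hexRel, Submodule.span_le]
  rintro x ⟨α, β, rfl⟩
  exact Lf_hex ε hε2 j α β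

lemma Lf_mono_zero (ε : ℚ) (j a b : ℤ) (h1 : ¬(a = j-1 ∧ b = j-2)) (h2 : ¬(a = 2-j ∧ b = 1-j)) :
    Lf ε j (mono a b) = 0 := by
  rw [Lf_mono, if_neg h1, if_neg h2]; ring

lemma Lf_W (ε : ℚ) (hε2 : ε * ε = 1) (j k : ℤ) (hj : 4 ≤ j) (hk : 4 ≤ k) :
    Lf ε j (W ε k) = if j = k then 1 else 0 := by
  have z1 : Lf ε j (mono (-1) (1-k)) = 0 := Lf_mono_zero ε j _ _ (by omega) (by omega)
  have z2 : Lf ε j (mono (1-k) (-1)) = 0 := Lf_mono_zero ε j _ _ (by omega) (by omega)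
  have z3 : Lf ε j (mono (2-k) 1) = 0 := Lf_mono_zero ε j _ _ (by omega) (by omega)
  have z4 : Lf ε j (mono 1 (2-k)) = 0 := Lf_mono_zero ε j _ _ (by omega) (by omega)
  have z5 : Lf ε j (mono 1 (k-1)) = 0 := Lf_mono_zero ε j _ _ (by omega) (by omega)
  have z6 : Lf ε j (mono (k-1) 1) = 0 := Lf_mono_zero ε j _ _ (by omega) (by omega)
  have z7 : Lf ε j (mono (1-k) (2-k)) = 0 := Lf_mono_zero ε j _ _ (by omega) (by omega)
  have z8 : Lf ε j (mono (2-k) (1-k)) = -ε * (if j = k then 1 else 0) := by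
    rw [Lf_mono, if_neg (by omega)]
    have : ((2-k = 2-j ∧ 1-k = 1-j) ↔ j = k) := by constructor <;> (intro h; omega)
    rw [if_congr this rfl rfl]; split_ifs <;> ring
  simp only [W, map_add, map_sub, map_smul, z1, z2, z3, z4, z5, z6, z7, z8, smul_eq_mul]
  split_ifs <;> nlinarith [hε2]

/-- The images in `Λ/R` of the elements `W_k`, `k ≥ 4`, are linearly independent over `ℚ`. -/
theorem W_images_linearIndependent (ε : ℚ) (hε : ε = 1 ∨ ε = -1) :
    LinearIndependent ℚ (fun k : {k : ℤ // 4 ≤ k} => (hexRel ε).mkQ (W ε k.1)) := by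
  have hε2 : ε * ε = 1 := by rcases hε with h | h <;> simp [h]
  rw [linearIndependent_iff']
  intro s g hsum i hi
  have this := congrArg (Submodule.liftQ (hexRel ε) (Lf ε i.1) (Lf_ker ε hε2 i.1)) hsum
  rw [map_sum, map_zero] at this
  simp only [map_smul, Submodule.mkQ_apply, Submodule.liftQ_apply] at this
  have key : ∀ k ∈ s, g k • (Lf ε i.1 (W ε k.1)) = if k = i then g k else 0 := by
    intro k _
    rw [Lf_W ε hε2 i.1 k.1 i.2 k.2]
    by_cases h : k = i
    · simp [h]
    · have h' : ¬ (i.1 = k.1) := fun hh => h (Subtype.ext hh.symm)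
      simp [h, h']
  rw [Finset.sum_congr rfl key, Finset.sum_ite_eq' s i g, if_pos hi] at this
  exact this
end

section
/- The quotient ℚ-vector space Λ/R is infinite-dimensional over ℚ; in particular it is not finitely generated as a ℚ-module. -/
/-- The indicator function of the orbit of `(n+1, 0)` under the order-6 map
`σ(a,b) = (b, b-a)`. -/
noncomputable def orbInd (n : ℕ) : ℤ × ℤ → ℚ := fun p =>
  if p = ((n : ℤ) + 1, 0) ∨ p = (0, -((n : ℤ) + 1)) ∨ p = (-((n : ℤ) + 1), -((n : ℤ) + 1))
      ∨ p = (-((n : ℤ) + 1), 0) ∨ p = (0, (n : ℤ) + 1) ∨ p = ((n : ℤ) + 1, (n : ℤ) + 1)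
  then 1 else 0

lemma orbInd_sigma (n : ℕ) (a b : ℤ) : orbInd n (b, b - a) = orbInd n (a, b) := by
  unfold orbInd
  simp only [Prod.mk.injEq]
  split_ifs with h1 h2 <;> first | rfl | (exfalso; omega)

/-- The linear functional on `Λ` induced by a function `f : ℤ² → ℚ`. -/
noncomputable def phi (f : ℤ × ℤ → ℚ) : Lam →ₗ[ℚ] ℚ :=
  Finsupp.linearCombination ℚ f ∘ₗ (AddMonoidAlgebra.coeffLinearEquiv ℚ).toLinearMap

lemma phi_mono (f : ℤ × ℤ → ℚ) (a b : ℤ) : phi f (mono a b) = f (a, b) := by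
  exact (Finsupp.linearCombination_single (R := ℚ) (v := f) 1 (a, b)).trans
    (one_smul ℚ (f (a, b)))

lemma phi_hex (f : ℤ × ℤ → ℚ) (hf : ∀ a b : ℤ, f (b, b - a) = f (a, b))
    (ε : ℚ) (α β : ℤ) : phi f (hex ε α β) = 0 := by
  have h1 := hf α (α - β)
  have h2 := hf β (β - α)
  rw [show α - β - α = -β by ring] at h1
  rw [show β - α - β = -α by ring] at h2
  simp only [hex, map_add, map_sub, map_smul, phi_mono, h1, h2, sub_self, smul_zero, add_zero]

lemma hexRel_le_ker (f : ℤ × ℤ → ℚ) (hf : ∀ a b : ℤ, f (b, b - a) = f (a, b)) (ε : ℚ) :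
    hexRel ε ≤ LinearMap.ker (phi f) := by
  rw [hexRel, Submodule.span_le]
  rintro x ⟨α, β, rfl⟩
  exact phi_hex f hf ε α β

/-- The map `Λ → (ℕ → ℚ)` assembling all the orbit-indicator functionals. -/
noncomputable def Psi : Lam →ₗ[ℚ] (ℕ → ℚ) := LinearMap.pi (fun n => phi (orbInd n))

lemma hexRel_le_ker_Psi (ε : ℚ) : hexRel ε ≤ LinearMap.ker Psi := by
  intro x hx
  rw [LinearMap.mem_ker]
  funext n
  exact hexRel_le_ker (orbInd n) (orbInd_sigma n) ε hx

/-- The quotient `Λ/R` is infinite-dimensional over `ℚ`; in particular it is not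
finitely generated as a `ℚ`-module. -/
theorem quotient_not_finiteDimensional (ε : ℚ) (hε : ε = 1 ∨ ε = -1) :
    ¬ Module.Finite ℚ (Lam ⧸ hexRel ε) := by
  intro hfin
  -- lift Psi to the quotient
  set Ψ : (Lam ⧸ hexRel ε) →ₗ[ℚ] (ℕ → ℚ) :=
    Submodule.liftQ (hexRel ε) Psi (hexRel_le_ker_Psi ε) with hΨ
  have key : ∀ m : ℕ, Ψ (Submodule.Quotient.mk (mono ((m : ℤ) + 1) 0)) =
      fun n => if n = m then (1 : ℚ) else 0 := by
    intro m
    funext n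
    rw [hΨ, Submodule.liftQ_apply]
    show phi (orbInd n) (mono ((m : ℤ) + 1) 0) = _
    rw [phi_mono, orbInd]
    simp only [Prod.mk.injEq, and_true]
    split_ifs with h1 h2 <;> first | rfl | (exfalso; omega)
  have hli : LinearIndependent ℚ
      (fun m : ℕ => (Submodule.Quotient.mk (mono ((m : ℤ) + 1) 0) : Lam ⧸ hexRel ε)) := by
    apply LinearIndependent.of_comp Ψ
    rw [linearIndependent_iff']
    intro s g hsum m hm
    have := congrFun hsum m
    simp only [Function.comp_apply, key, Finset.sum_apply, Pi.smul_apply, smul_eq_mul,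
      mul_ite, mul_one, mul_zero, Pi.zero_apply] at this
    rwa [Finset.sum_ite_eq s m g, if_pos hm] at this
  exact Module.Finite.not_linearIndependent_of_infinite _ hli
end

section
/- For all α, β ∈ ℤ, the images in Λ/R of the following six elements of Λ all coincide: t₁^{α} t₃^{β} + ε·t₁^{−β} t₃^{−α}; t₁^{α−β} t₃^{α} + ε·t₁^{−α} t₃^{β−α}; t₁^{−β} t₃^{α−β} + ε·t₁^{β−α} t₃^{β}; t₁^{−α} t₃^{−β} + ε·t₁^{β} t₃^{α}; t₁^{β−α} t₃^{−α} + ε·t₁^{α} t₃^{α−β}; t₁^{β} t₃^{β−α} + ε·t₁^{α−β} t₃^{−β}. -/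
/-- The basic step: quotienting by the hexagon relator `hex ε a b` identifies
`t₁^{a−b} t₃^{−b} + ε·t₁^{b} t₃^{b−a}` with `t₁^{a} t₃^{a−b} + ε·t₁^{b−a} t₃^{−a}`. -/
lemma hex_key (ε : ℚ) (a b : ℤ) :
    (hexRel ε).mkQ (mono (a - b) (-b) + ε • mono b (b - a))
      = (hexRel ε).mkQ (mono a (a - b) + ε • mono (b - a) (-a)) := by
  rw [Submodule.mkQ_apply, Submodule.mkQ_apply, Submodule.Quotient.eq]
  have h : (mono (a - b) (-b) + ε • mono b (b - a))
      - (mono a (a - b) + ε • mono (b - a) (-a)) = hex ε a b := by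
    unfold hex; rw [smul_sub]; abel
  rw [h]
  exact Submodule.subset_span ⟨a, b, rfl⟩

/-- In `Λ/R`, for all `α, β ∈ ℤ`, the images of the six elements
`t₁^{α} t₃^{β} + ε·t₁^{−β} t₃^{−α}`, `t₁^{α−β} t₃^{α} + ε·t₁^{−α} t₃^{β−α}`,
`t₁^{−β} t₃^{α−β} + ε·t₁^{β−α} t₃^{β}`, `t₁^{−α} t₃^{−β} + ε·t₁^{β} t₃^{α}`,
`t₁^{β−α} t₃^{−α} + ε·t₁^{α} t₃^{α−β}`, `t₁^{β} t₃^{β−α} + ε·t₁^{α−β} t₃^{−β}`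
all coincide. -/
theorem hexagon_orbit_eq (ε : ℚ) (hε : ε = 1 ∨ ε = -1) (α β : ℤ) :
    (hexRel ε).mkQ (mono α β + ε • mono (-β) (-α))
        = (hexRel ε).mkQ (mono (α - β) α + ε • mono (-α) (β - α)) ∧
    (hexRel ε).mkQ (mono (α - β) α + ε • mono (-α) (β - α))
        = (hexRel ε).mkQ (mono (-β) (α - β) + ε • mono (β - α) β) ∧
    (hexRel ε).mkQ (mono (-β) (α - β) + ε • mono (β - α) β)
        = (hexRel ε).mkQ (mono (-α) (-β) + ε • mono β α) ∧
    (hexRel ε).mkQ (mono (-α) (-β) + ε • mono β α)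
        = (hexRel ε).mkQ (mono (β - α) (-α) + ε • mono α (α - β)) ∧
    (hexRel ε).mkQ (mono (β - α) (-α) + ε • mono α (α - β))
        = (hexRel ε).mkQ (mono β (β - α) + ε • mono (α - β) (-β)) := by
  refine ⟨?_, ?_, ?_, ?_, ?_⟩
  · have h := hex_key ε (α - β) (-β); ring_nf at h ⊢; exact h
  · have h := hex_key ε (-β) (-α); ring_nf at h ⊢; exact h
  · have h := hex_key ε (-α) (β - α); ring_nf at h ⊢; exact h
  · have h := hex_key ε (β - α) β; ring_nf at h ⊢; exact h
  · have h := hex_key ε β α; ring_nf at h ⊢; exact h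
end

section
/- If ε = 1 (the case n even), then the image of W₃ in Λ/R is zero, i.e. W₃ = 2·(t₁^{−1} t₃^{−2} + t₁^{−2} t₃^{−1} − t₁^{−1} t₃ − t₁ t₃^{−1}) + t₁ t₃² + t₁² t₃ − t₁^{−2} t₃^{−1} − t₁^{−1} t₃^{−2} lies in R. -/
/-- For `ε = 1` (the case `n` even), the image of `W₃` in `Λ/R` is zero, i.e.
`W₃ = 2·(t₁^{−1}t₃^{−2} + t₁^{−2}t₃^{−1} − t₁^{−1}t₃ − t₁t₃^{−1}) + t₁t₃² + t₁²t₃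
 − t₁^{−2}t₃^{−1} − t₁^{−1}t₃^{−2}` lies in `R`. -/
theorem W3_eps_one_in_R :
    W 1 3 = (2 : ℚ) • (mono (-1) (-2) + mono (-2) (-1) - mono (-1) 1 - mono 1 (-1))
        + mono 1 2 + mono 2 1 - mono (-2) (-1) - mono (-1) (-2) ∧
    W 1 3 ∈ hexRel 1 := by
  have key : W 1 3 = hex 1 1 2 - hex 1 (-2) (-1) := by
    simp only [W, hex]
    norm_num
    module
  constructor
  · rw [key]
    simp only [hex]
    norm_num
    module
  · rw [key]
    exact Submodule.sub_mem _
      (Submodule.subset_span ⟨1, 2, rfl⟩)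
      (Submodule.subset_span ⟨-2, -1, rfl⟩)
end
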